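/- If m_1 = m_2 = m_3 = m_4 = m > 0, then σ_1 < σ_2 < σ_3 for all roots r_1 < r_2 < r_3 < r_4. -/

import Mathlib

set_option maxHeartbeats 1000000

lemma key (a b c t s : ℝ) (ha : 0 < a) (hb : 0 < b) (hc : 0 < c)
    (ht0 : 0 < t) (ht : t ≤ 1/2) (hs0 : 0 < s) (hs1 : s < 1)
    (H2 : 1/(a+t*b) + 1/(t*b) - 1/((1-t)*b) - 1/((1-t)*b+c) = 0)
    (H1 : 1/(s*a) - 1/((1-s)*a) - 1/((1-s)*a+b) - 1/((1-s)*a+b+c) = 0) : s < t := by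
  have h1t : 0 < 1 - t := by linarith
  have hu : 0 ≤ 1 - 2*t := by linarith
  have ptb : 0 < t*b := mul_pos ht0 hb
  have pd2 : 0 < a + t*b := by linarith
  have p1tb : 0 < (1-t)*b := mul_pos h1t hb
  have pD1 : 0 < (1-t)*b + c := by linarith
  have P : (1-2*t)*((1-t)*b+c)*(a+t*b) = t*(1-t)*b*((a+t*b) - ((1-t)*b+c)) := by
    field_simp at H2
    refine mul_left_cancel₀ hb.ne' ?_
    linear_combination b * H2
  -- Z := t(1-t)b - (1-2t)D1 > 0
  have key5 : (t*(1-t)*b - (1-2*t)*((1-t)*b+c)) * (a+t*b) = t*(1-t)*b*((1-t)*b+c) := by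
    linear_combination -P
  have hZ : 0 < t*(1-t)*b - (1-2*t)*((1-t)*b+c) := by
    nlinarith [key5, mul_pos (mul_pos ptb h1t) pD1, pd2]
  have identity6 : a * (t*(1-t)*b - (1-2*t)*((1-t)*b+c))
      = (1-2*t)*t*b*((1-t)*b+c) + t*(1-t)*b*((1-2*t)*b + c) := by
    linear_combination -P
  -- unconditional polynomial inequality
  have step7 : (1-2*t)*(2*b+c) * (t*(1-t)*b - (1-2*t)*((1-t)*b+c))
      ≤ 2*(1-t)*(4*t-1) * ((1-2*t)*t*b*((1-t)*b+c) + t*(1-t)*b*((1-2*t)*b + c)) := by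
    nlinarith [mul_pos hb hc, mul_nonneg (pow_nonneg hu 2) (mul_pos hb hb).le,
      mul_nonneg (pow_nonneg hu 2) (mul_pos hb hc).le,
      mul_nonneg (pow_nonneg hu 2) (mul_pos hc hc).le,
      mul_nonneg (pow_nonneg hu 3) (mul_pos hb hc).le,
      mul_nonneg (pow_nonneg hu 4) (mul_pos hb hc).le,
      mul_nonneg (pow_nonneg hu 4) (mul_pos hb hb).le,
      mul_nonneg (pow_nonneg hu 5) (mul_pos hb hb).le]
  have step7' : (1-2*t)*(2*b+c) * (t*(1-t)*b - (1-2*t)*((1-t)*b+c))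
      ≤ 2*(1-t)*(4*t-1) * (a * (t*(1-t)*b - (1-2*t)*((1-t)*b+c))) := by
    calc (1-2*t)*(2*b+c) * (t*(1-t)*b - (1-2*t)*((1-t)*b+c))
        ≤ 2*(1-t)*(4*t-1) * ((1-2*t)*t*b*((1-t)*b+c) + t*(1-t)*b*((1-2*t)*b + c)) := step7
      _ = 2*(1-t)*(4*t-1) * (a * (t*(1-t)*b - (1-2*t)*((1-t)*b+c))) := by
          linear_combination (2*(1-t)*(4*t-1)) * identity6.symm
  have W' : (1-2*t)*(2*b+c) ≤ 2*(1-t)*(4*t-1)*a := by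
    by_contra hcon
    push_neg at hcon
    nlinarith [step7', mul_pos (sub_pos.mpr hcon) hZ]
  -- step8 : u*(E1+E2) ≤ 4*t*(1-t)*a
  have step8 : (1-2*t)*(((1-t)*a+b) + ((1-t)*a+b+c)) ≤ 4*(t*(1-t)*a) := by linarith [W']
  have pE1 : 0 < (1-t)*a + b := by nlinarith [mul_pos h1t ha]
  have pE2 : 0 < (1-t)*a + b + c := by linarith
  have final9 : (1-2*t)*(((1-t)*a+b)*((1-t)*a+b+c))
      < t*(1-t)*a*(((1-t)*a+b) + ((1-t)*a+b+c)) := by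
    have slack : 0 ≤ 4*(t*(1-t)*a) - (1-2*t)*(((1-t)*a+b) + ((1-t)*a+b+c)) := by linarith
    have prod : 0 ≤ (((1-t)*a+b) + ((1-t)*a+b+c)) *
        (4*(t*(1-t)*a) - (1-2*t)*(((1-t)*a+b) + ((1-t)*a+b+c))) :=
      mul_nonneg (by linarith) slack
    rcases eq_or_lt_of_le hu with h0 | hpos
    · have z : (1-2*t)*(((1-t)*a+b)*((1-t)*a+b+c)) = 0 := by rw [← h0]; ring
      have rpos : 0 < t*(1-t)*a*(((1-t)*a+b) + ((1-t)*a+b+c)) :=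
        mul_pos (mul_pos (mul_pos ht0 h1t) ha) (by linarith)
      linarith [z, rpos]
    · nlinarith [prod, mul_pos hpos (mul_pos hc hc)]
  have hta : 0 < t*a := mul_pos ht0 ha
  have h1ta : 0 < (1-t)*a := mul_pos h1t ha
  have F1neg : 1/(t*a) - 1/((1-t)*a) - 1/((1-t)*a+b) - 1/((1-t)*a+b+c) < 0 := by
    have expand : 1/(t*a) - 1/((1-t)*a) - 1/((1-t)*a+b) - 1/((1-t)*a+b+c)
        = ((1-2*t)*(((1-t)*a+b)*((1-t)*a+b+c))
            - t*(1-t)*a*(((1-t)*a+b) + ((1-t)*a+b+c)))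
          / (t*(1-t)*a*(((1-t)*a+b)*((1-t)*a+b+c))) := by
      field_simp
      ring
    rw [expand]
    apply div_neg_of_neg_of_pos
    · linarith [final9]
    · positivity
  by_contra hst
  push_neg at hst
  have hsa : 0 < s*a := mul_pos hs0 ha
  have h1sa : 0 < (1-s)*a := mul_pos (by linarith) ha
  have m1 : 1/(s*a) ≤ 1/(t*a) :=
    one_div_le_one_div_of_le hta (mul_le_mul_of_nonneg_right hst ha.le)
  have m2 : 1/((1-t)*a) ≤ 1/((1-s)*a) :=
    one_div_le_one_div_of_le h1sa (mul_le_mul_of_nonneg_right (by linarith) ha.le)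
  have m3 : 1/((1-t)*a+b) ≤ 1/((1-s)*a+b) :=
    one_div_le_one_div_of_le (by linarith) (by nlinarith)
  have m4 : 1/((1-t)*a+b+c) ≤ 1/((1-s)*a+b+c) :=
    one_div_le_one_div_of_le (by linarith) (by nlinarith)
  linarith [H1, F1neg, m1, m2, m3, m4]

/-- If `m₁ = m₂ = m₃ = m₄ = m > 0`, then `σ₁ < σ₂ < σ₃`. -/
theorem stmt_17 (m : ℝ) (hm : 0 < m)
    (r1 r2 r3 r4 : ℝ) (h12 : r1 < r2) (h23 : r2 < r3) (h34 : r3 < r4)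
    (x1 x2 x3 : ℝ) (hx1 : x1 ∈ Set.Ioo r1 r2) (hx2 : x2 ∈ Set.Ioo r2 r3)
    (hx3 : x3 ∈ Set.Ioo r3 r4)
    (hc1 : 1 / (x1 - r1) + 1 / (x1 - r2) + 1 / (x1 - r3) + 1 / (x1 - r4) = 0)
    (hc2 : 1 / (x2 - r1) + 1 / (x2 - r2) + 1 / (x2 - r3) + 1 / (x2 - r4) = 0)
    (hc3 : 1 / (x3 - r1) + 1 / (x3 - r2) + 1 / (x3 - r3) + 1 / (x3 - r4) = 0)
    (σ1 σ2 σ3 : ℝ) (hσ1 : σ1 = (x1 - r1) / (r2 - r1))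
    (hσ2 : σ2 = (x2 - r2) / (r3 - r2)) (hσ3 : σ3 = (x3 - r3) / (r4 - r3)) :
    σ1 < σ2 ∧ σ2 < σ3 := by
  obtain ⟨hx1a, hx1b⟩ := hx1
  obtain ⟨hx2a, hx2b⟩ := hx2
  obtain ⟨hx3a, hx3b⟩ := hx3
  have ha : 0 < r2 - r1 := by linarith
  have hb : 0 < r3 - r2 := by linarith
  have hcc : 0 < r4 - r3 := by linarith
  -- rewritten conditions with positive denominators
  have hc1' : 1/(x1-r1) - 1/(r2-x1) - 1/(r3-x1) - 1/(r4-x1) = 0 := by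
    have n2 : 1/(x1-r2) = -(1/(r2-x1)) := by rw [show x1-r2 = -(r2-x1) by ring, div_neg]
    have n3 : 1/(x1-r3) = -(1/(r3-x1)) := by rw [show x1-r3 = -(r3-x1) by ring, div_neg]
    have n4 : 1/(x1-r4) = -(1/(r4-x1)) := by rw [show x1-r4 = -(r4-x1) by ring, div_neg]
    rw [n2, n3, n4] at hc1; linarith
  have hc2' : 1/(x2-r1) + 1/(x2-r2) - 1/(r3-x2) - 1/(r4-x2) = 0 := by
    have n3 : 1/(x2-r3) = -(1/(r3-x2)) := by rw [show x2-r3 = -(r3-x2) by ring, div_neg]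
    have n4 : 1/(x2-r4) = -(1/(r4-x2)) := by rw [show x2-r4 = -(r4-x2) by ring, div_neg]
    rw [n3, n4] at hc2; linarith
  have hc3' : 1/(r4-x3) - 1/(x3-r3) - 1/(x3-r2) - 1/(x3-r1) = 0 := by
    have n4 : 1/(x3-r4) = -(1/(r4-x3)) := by rw [show x3-r4 = -(r4-x3) by ring, div_neg]
    rw [n4] at hc3; linarith
  -- sigma facts
  have hσ1pos : 0 < σ1 := by rw [hσ1]; exact div_pos (by linarith) ha
  have hσ1lt1 : σ1 < 1 := by rw [hσ1]; exact (div_lt_one ha).mpr (by linarith)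
  have hσ2pos : 0 < σ2 := by rw [hσ2]; exact div_pos (by linarith) hb
  have hσ2lt1 : σ2 < 1 := by rw [hσ2]; exact (div_lt_one hb).mpr (by linarith)
  have hσ3pos : 0 < σ3 := by rw [hσ3]; exact div_pos (by linarith) hcc
  have hσ3lt1 : σ3 < 1 := by rw [hσ3]; exact (div_lt_one hcc).mpr (by linarith)
  have e1 : σ1*(r2-r1) = x1-r1 := by rw [hσ1]; field_simp
  have e2 : (1-σ1)*(r2-r1) = r2-x1 := by linear_combination -e1
  have f1 : σ2*(r3-r2) = x2-r2 := by rw [hσ2]; field_simp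
  have f2 : (1-σ2)*(r3-r2) = r3-x2 := by linear_combination -f1
  have g1 : σ3*(r4-r3) = x3-r3 := by rw [hσ3]; field_simp
  have g2 : (1-σ3)*(r4-r3) = r4-x3 := by linear_combination -g1
  -- conditions in key's form
  have K1 : 1/(σ1*(r2-r1)) - 1/((1-σ1)*(r2-r1)) - 1/((1-σ1)*(r2-r1)+(r3-r2))
      - 1/((1-σ1)*(r2-r1)+(r3-r2)+(r4-r3)) = 0 := by
    rw [e1, e2, show r2-x1+(r3-r2) = r3-x1 by ring, show r3-x1+(r4-r3) = r4-x1 by ring]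
    exact hc1'
  have K2 : 1/((r2-r1)+σ2*(r3-r2)) + 1/(σ2*(r3-r2)) - 1/((1-σ2)*(r3-r2))
      - 1/((1-σ2)*(r3-r2)+(r4-r3)) = 0 := by
    rw [f1, f2, show r2-r1+(x2-r2) = x2-r1 by ring, show r3-x2+(r4-r3) = r4-x2 by ring]
    exact hc2'
  have K2r : 1/((r4-r3)+(1-σ2)*(r3-r2)) + 1/((1-σ2)*(r3-r2)) - 1/((1-(1-σ2))*(r3-r2))
      - 1/((1-(1-σ2))*(r3-r2)+(r2-r1)) = 0 := by
    rw [show (1:ℝ)-(1-σ2) = σ2 by ring, f1, f2, show r4-r3+(r3-x2) = r4-x2 by ring,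
      show x2-r2+(r2-r1) = x2-r1 by ring]
    linarith [hc2']
  have K3r : 1/((1-σ3)*(r4-r3)) - 1/((1-(1-σ3))*(r4-r3)) - 1/((1-(1-σ3))*(r4-r3)+(r3-r2))
      - 1/((1-(1-σ3))*(r4-r3)+(r3-r2)+(r2-r1)) = 0 := by
    rw [show (1:ℝ)-(1-σ3) = σ3 by ring, g1, g2, show x3-r3+(r3-r2) = x3-r2 by ring,
      show x3-r2+(r2-r1) = x3-r1 by ring]
    exact hc3'
  -- half lemmas
  have hhalf1 : σ1 < 1/2 := by
    have p2 : 0 < 1/(r3-x1) := one_div_pos.mpr (by linarith)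
    have p3 : 0 < 1/(r4-x1) := one_div_pos.mpr (by linarith)
    have h : 1/(r2-x1) < 1/(x1-r1) := by linarith
    have := (one_div_lt_one_div (by linarith : (0:ℝ) < r2-x1) (by linarith : (0:ℝ) < x1-r1)).mp h
    rw [hσ1, div_lt_iff₀ ha]; linarith
  have hhalf3 : 1/2 < σ3 := by
    have p2 : 0 < 1/(x3-r2) := one_div_pos.mpr (by linarith)
    have p3 : 0 < 1/(x3-r1) := one_div_pos.mpr (by linarith)
    have h : 1/(x3-r3) < 1/(r4-x3) := by linarith
    have := (one_div_lt_one_div (by linarith : (0:ℝ) < x3-r3) (by linarith : (0:ℝ) < r4-x3)).mp h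
    rw [hσ3, lt_div_iff₀ hcc]; linarith
  rcases le_or_gt σ2 (1/2) with hle | hgt
  · refine ⟨?_, by linarith⟩
    exact key (r2-r1) (r3-r2) (r4-r3) σ2 σ1 ha hb hcc hσ2pos hle hσ1pos hσ1lt1 K2 K1
  · refine ⟨by linarith, ?_⟩
    have := key (r4-r3) (r3-r2) (r2-r1) (1-σ2) (1-σ3) hcc hb ha (by linarith) (by linarith)
      (by linarith) (by linarith) K2r K3r
    linarith
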